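/- For a Dirichlet-distributed random probability vector π with parameters n_i + s t_i (total n + s), the expected value of π_i is u_i = (n_i + s t_i)/(n + s), and the expected entropy E[H(π)] equals Σ_i h(u_i) with h(u) = u[ψ(n+s+1) − ψ((n+s)u+1)]. -/

import Mathlib

open MeasureTheory
open scoped BigOperators

/-- The digamma function, the logarithmic derivative of the Gamma function. -/
noncomputable def digamma (x : ℝ) : ℝ := deriv (fun y => Real.log (Real.Gamma y)) x

namespace DirAux
open Real Set
open scoped ENNReal

noncomputable def ppi (d : ℕ) (y : Fin d → ℝ) : Fin (d + 1) → ℝ :=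
  Fin.snoc y (1 - ∑ i, y i)

def SS (d : ℕ) : Set (Fin d → ℝ) := {y | (∀ i, 0 < y i) ∧ ∑ i, y i < 1}

lemma measurableSet_SS (d : ℕ) : MeasurableSet (SS d) := by
  have h1 : MeasurableSet {y : Fin d → ℝ | ∀ i, 0 < y i} := by
    have : {y : Fin d → ℝ | ∀ i, 0 < y i} = ⋂ i, (fun y => y i) ⁻¹' Ioi 0 := by
      ext y; simp
    rw [this]
    exact MeasurableSet.iInter fun i => (measurable_pi_apply i) measurableSet_Ioi
  have h2 : MeasurableSet {y : Fin d → ℝ | ∑ i, y i < 1} :=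
    measurableSet_lt (by measurability) measurable_const
  exact h1.inter h2

lemma measurable_ppi (d : ℕ) (i : Fin (d + 1)) : Measurable fun y => ppi d y i := by
  induction i using Fin.lastCases with
  | last =>
    simp only [ppi, Fin.snoc_last]
    exact (measurable_const (a := (1:ℝ))).sub (Finset.measurable_sum Finset.univ fun i _ => measurable_pi_apply i)
  | cast j => simpa [ppi] using measurable_pi_apply j

lemma ppi_pos {d : ℕ} {y : Fin d → ℝ} (hy : y ∈ SS d) (i : Fin (d + 1)) : 0 < ppi d y i := by
  induction i using Fin.lastCases with
  | last => simpa [ppi] using sub_pos.2 hy.2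
  | cast j => simpa [ppi] using hy.1 j

lemma ppi_le_one {d : ℕ} {y : Fin d → ℝ} (hy : y ∈ SS d) (i : Fin (d + 1)) : ppi d y i ≤ 1 := by
  have hsum : 0 ≤ ∑ k, y k := Finset.sum_nonneg fun k _ => (hy.1 k).le
  induction i using Fin.lastCases with
  | last => simp only [ppi, Fin.snoc_last]; linarith
  | cast j =>
      simp only [ppi, Fin.snoc_castSucc]
      have : y j ≤ ∑ k, y k := Finset.single_le_sum (fun k _ => (hy.1 k).le) (Finset.mem_univ j)
      linarith [hy.2]

noncomputable def dens (d : ℕ) (β : Fin (d + 1) → ℝ) (y : Fin d → ℝ) : ℝ :=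
  ∏ i, (ppi d y i) ^ (β i - 1)

lemma measurable_rpow_const (c : ℝ) : Measurable fun x : ℝ => x ^ c :=
  measurable_of_continuousOn_compl_singleton 0 fun x hx =>
    (Real.continuousAt_rpow_const x c (Or.inl (by simpa using hx))).continuousWithinAt

lemma measurable_dens (d : ℕ) (β : Fin (d + 1) → ℝ) : Measurable (dens d β) :=
  Finset.measurable_prod _ fun i _ => (measurable_rpow_const _).comp (measurable_ppi d i)

lemma dens_nonneg_on {d : ℕ} {β : Fin (d + 1) → ℝ} {y : Fin d → ℝ} (hy : y ∈ SS d) :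
    0 ≤ dens d β y :=
  Finset.prod_nonneg fun i _ => (rpow_pos_of_pos (ppi_pos hy i) _).le

/-- The real Beta integral. -/
lemma betaReal_intervalIntegrable {p q : ℝ} (hp : 0 < p) (hq : 0 < q) :
    IntervalIntegrable (fun x : ℝ => x ^ (p - 1) * (1 - x) ^ (q - 1)) volume 0 1 := by
  have hc : IntervalIntegrable (fun x : ℝ =>
      (x : ℂ) ^ ((p : ℂ) - 1) * ((1 : ℂ) - x) ^ ((q : ℂ) - 1)) volume 0 1 := by
    simpa using Complex.betaIntegral_convergent (u := (p : ℂ)) (v := (q : ℂ))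
      (by simpa using hp) (by simpa using hq)
  rw [intervalIntegrable_iff] at hc ⊢
  have hre : IntegrableOn (fun x : ℝ =>
      ((x : ℂ) ^ ((p : ℂ) - 1) * ((1 : ℂ) - x) ^ ((q : ℂ) - 1)).re) (Set.uIoc 0 1) volume := hc.re
  refine hre.congr_fun ?_ measurableSet_uIoc
  intro x hx
  rw [uIoc_of_le zero_le_one] at hx
  have hx0 : (0:ℝ) ≤ x := hx.1.le
  have hx1 : (0:ℝ) ≤ 1 - x := by linarith [hx.2]
  have e1 : ((x : ℂ)) ^ ((p : ℂ) - 1) = ((x ^ (p - 1) : ℝ) : ℂ) := by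
    rw [Complex.ofReal_cpow hx0]; push_cast; ring_nf
  have e2 : ((1 : ℂ) - (x:ℂ)) ^ ((q : ℂ) - 1) = (((1 - x) ^ (q - 1) : ℝ) : ℂ) := by
    rw [show ((1:ℂ) - (x:ℂ)) = (((1 - x : ℝ)) : ℂ) by push_cast; ring,
      Complex.ofReal_cpow hx1]
    push_cast; ring_nf
  simp [e1, e2, ← Complex.ofReal_mul]

lemma betaReal_eq {p q : ℝ} (hp : 0 < p) (hq : 0 < q) :
    ∫ x in (0:ℝ)..1, x ^ (p - 1) * (1 - x) ^ (q - 1)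
      = Real.Gamma p * Real.Gamma q / Real.Gamma (p + q) := by
  have key := Complex.Gamma_mul_Gamma_eq_betaIntegral (s := (p:ℂ)) (t := (q:ℂ))
    (by simpa using hp) (by simpa using hq)
  have hBeta : Complex.betaIntegral (p:ℂ) (q:ℂ)
      = ((∫ x in (0:ℝ)..1, x ^ (p - 1) * (1 - x) ^ (q - 1) : ℝ) : ℂ) := by
    rw [Complex.betaIntegral, ← intervalIntegral.integral_ofReal]
    refine intervalIntegral.integral_congr ?_
    intro x hx
    rw [uIcc_of_le zero_le_one] at hx
    have hx0 : (0:ℝ) ≤ x := hx.1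
    have hx1 : (0:ℝ) ≤ 1 - x := by linarith [hx.2]
    have e1 : ((x : ℂ)) ^ ((p : ℂ) - 1) = ((x ^ (p - 1) : ℝ) : ℂ) := by
      rw [Complex.ofReal_cpow hx0]; push_cast; ring_nf
    have e2 : ((1 : ℂ) - (x:ℂ)) ^ ((q : ℂ) - 1) = (((1 - x) ^ (q - 1) : ℝ) : ℂ) := by
      rw [show ((1:ℂ) - (x:ℂ)) = (((1 - x : ℝ)) : ℂ) by push_cast; ring,
        Complex.ofReal_cpow hx1]
      push_cast; ring_nf
    simp [e1, e2, ← Complex.ofReal_mul]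
  rw [hBeta, ← Complex.ofReal_add, Complex.Gamma_ofReal, Complex.Gamma_ofReal,
    Complex.Gamma_ofReal, ← Complex.ofReal_mul, ← Complex.ofReal_mul] at key
  have := Complex.ofReal_injective key
  have hG : Real.Gamma (p + q) ≠ 0 := (Real.Gamma_pos_of_pos (by linarith)).ne'
  field_simp
  linarith [this]


lemma betaLintegral {p q : ℝ} (hp : 0 < p) (hq : 0 < q) :
    ∫⁻ x in Ioo (0:ℝ) 1, ENNReal.ofReal (x ^ (p - 1) * (1 - x) ^ (q - 1))
      = ENNReal.ofReal (Real.Gamma p * Real.Gamma q / Real.Gamma (p + q)) := by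
  have hint : IntegrableOn (fun x : ℝ => x ^ (p - 1) * (1 - x) ^ (q - 1)) (Ioo 0 1) volume := by
    have := (betaReal_intervalIntegrable hp hq)
    rw [intervalIntegrable_iff_integrableOn_Ioo_of_le zero_le_one] at this
    exact this
  have hnn : 0 ≤ᵐ[volume.restrict (Ioo (0:ℝ) 1)]
      fun x : ℝ => x ^ (p - 1) * (1 - x) ^ (q - 1) := by
    refine (ae_restrict_iff' measurableSet_Ioo).2 (ae_of_all _ fun x hx => ?_)
    exact mul_nonneg (rpow_nonneg hx.1.le _) (rpow_nonneg (by linarith [hx.2]) _)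
  rw [← ofReal_integral_eq_lintegral_ofReal hint hnn]
  congr 1
  calc ∫ x in Ioo (0:ℝ) 1, x ^ (p - 1) * (1 - x) ^ (q - 1)
      = ∫ x in Ioc (0:ℝ) 1, x ^ (p - 1) * (1 - x) ^ (q - 1) :=
        setIntegral_congr_set Ioo_ae_eq_Ioc
    _ = ∫ x in (0:ℝ)..1, x ^ (p - 1) * (1 - x) ^ (q - 1) :=
        (intervalIntegral.integral_of_le zero_le_one).symm
    _ = Real.Gamma p * Real.Gamma q / Real.Gamma (p + q) := betaReal_eq hp hq

lemma betaLintegral_scaled {p q : ℝ} (hp : 0 < p) (hq : 0 < q) {c : ℝ} (hc : 0 < c) :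
    ∫⁻ x in Ioo (0:ℝ) c, ENNReal.ofReal (x ^ (p - 1) * (c - x) ^ (q - 1))
      = ENNReal.ofReal (c ^ (p + q - 1) *
          (Real.Gamma p * Real.Gamma q / Real.Gamma (p + q))) := by
  have hmap : Measure.map (fun x : ℝ => c * x) volume
      = ENNReal.ofReal |c⁻¹| • volume := Real.map_volume_mul_left hc.ne'
  have hvol : (volume : Measure ℝ) = ENNReal.ofReal c • Measure.map (fun x : ℝ => c * x) volume := by
    rw [hmap, smul_smul, abs_of_pos (inv_pos.2 hc), ← ENNReal.ofReal_mul hc.le,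
      mul_inv_cancel₀ hc.ne', ENNReal.ofReal_one, one_smul]
  have hmeas : Measurable fun x : ℝ => ENNReal.ofReal (x ^ (p - 1) * (c - x) ^ (q - 1)) :=
    ((measurable_rpow_const _).mul ((measurable_rpow_const _).comp (measurable_const.sub
      measurable_id))).ennreal_ofReal
  calc ∫⁻ x in Ioo (0:ℝ) c, ENNReal.ofReal (x ^ (p - 1) * (c - x) ^ (q - 1))
      = ENNReal.ofReal c * ∫⁻ x in Ioo (0:ℝ) c, ENNReal.ofReal (x ^ (p - 1) * (c - x) ^ (q - 1))
          ∂(Measure.map (fun x : ℝ => c * x) volume) := by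
        conv_lhs => rw [hvol]
        simp [Measure.restrict_smul, lintegral_smul_measure]
    _ = ENNReal.ofReal c * ∫⁻ u in (fun x : ℝ => c * x) ⁻¹' (Ioo (0:ℝ) c),
          ENNReal.ofReal ((c*u) ^ (p - 1) * (c - c*u) ^ (q - 1)) := by
        rw [setLIntegral_map measurableSet_Ioo hmeas (measurable_const_mul c)]
    _ = ENNReal.ofReal c * ∫⁻ u in Ioo (0:ℝ) 1,
          ENNReal.ofReal ((c*u) ^ (p - 1) * (c - c*u) ^ (q - 1)) := by
        have hpre : (fun x : ℝ => c * x) ⁻¹' (Ioo (0:ℝ) c) = Ioo (0:ℝ) 1 := by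
          ext u; simp only [mem_preimage, mem_Ioo]
          constructor
          · rintro ⟨h1, h2⟩; constructor <;> nlinarith
          · rintro ⟨h1, h2⟩; constructor <;> nlinarith
        rw [hpre]
    _ = ENNReal.ofReal c * ∫⁻ u in Ioo (0:ℝ) 1,
          ENNReal.ofReal (c ^ (p-1) * c ^ (q-1) * (u ^ (p - 1) * (1 - u) ^ (q - 1))) := by
        congr 1
        refine lintegral_congr_ae ((ae_restrict_iff' measurableSet_Ioo).2
          (ae_of_all _ fun u hu => ?_))
        dsimp only
        congr 1
        rw [mul_rpow hc.le hu.1.le, show c - c*u = c * (1-u) by ring,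
          mul_rpow hc.le (by linarith [hu.2])]
        ring
    _ = ENNReal.ofReal (c ^ (p + q - 1) *
          (Real.Gamma p * Real.Gamma q / Real.Gamma (p + q))) := by
        have hsplit : ∫⁻ u in Ioo (0:ℝ) 1,
            ENNReal.ofReal (c ^ (p-1) * c ^ (q-1) * (u ^ (p - 1) * (1 - u) ^ (q - 1)))
            = ENNReal.ofReal (c ^ (p-1) * c ^ (q-1)) *
              ENNReal.ofReal (Real.Gamma p * Real.Gamma q / Real.Gamma (p + q)) := by
          rw [← betaLintegral hp hq, ← lintegral_const_mul' _ _ ENNReal.ofReal_ne_top]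
          refine lintegral_congr_ae ((ae_restrict_iff' measurableSet_Ioo).2
            (ae_of_all _ fun u hu => ?_))
          dsimp only
          rw [ENNReal.ofReal_mul (by positivity)]
        rw [hsplit, ← mul_assoc, ← ENNReal.ofReal_mul hc.le, ← ENNReal.ofReal_mul (by positivity),
          ← mul_assoc]
        congr 2
        rw [show c ^ (p+q-1) = c ^ ((1:ℝ)) * c ^ (p-1) * c ^ (q-1) by
          rw [← rpow_add hc, ← rpow_add hc]; ring_nf, rpow_one]


lemma dirichlet_lintegral : ∀ (d : ℕ) (β : Fin (d + 1) → ℝ), (∀ i, 0 < β i) →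
    ∫⁻ y in SS d, ENNReal.ofReal (dens d β y)
      = ENNReal.ofReal ((∏ i, Real.Gamma (β i)) / Real.Gamma (∑ i, β i)) := by
  intro d
  induction d with
  | zero =>
      intro β hβ
      have hS : SS 0 = univ := by
        ext y; simp [SS]
      have hval : ∀ y : Fin 0 → ℝ, dens 0 β y = 1 := by
        intro y
        rw [dens, Fin.prod_univ_one]
        have h0 : ppi 0 y 0 = 1 := by
          rw [ppi, show (0 : Fin 1) = Fin.last 0 from rfl, Fin.snoc_last]
          simp
        rw [h0, Real.one_rpow]
      simp only [hS, Measure.restrict_univ, hval]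
      rw [ENNReal.ofReal_one, lintegral_one]
      rw [show (volume : Measure (Fin 0 → ℝ)) univ = 1 by
        simp [volume_pi, Measure.pi_univ]]
      rw [Fin.prod_univ_one, Fin.sum_univ_one,
        div_self (Real.Gamma_pos_of_pos (hβ 0)).ne']
      simp
  | succ d IH =>
      intro β hβ
      have hp : 0 < β ((Fin.last d).castSucc) := hβ _
      have hq : 0 < β (Fin.last (d+1)) := hβ _
      set p := β ((Fin.last d).castSucc) with hp_def
      set q := β (Fin.last (d+1)) with hq_def
      set β' : Fin (d+1) → ℝ :=
        Fin.snoc (fun k : Fin d => β k.castSucc.castSucc) (p + q) with hβ'def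
      have hβ' : ∀ i, 0 < β' i := by
        intro i
        induction i using Fin.lastCases with
        | last =>
            rw [hβ'def, Fin.snoc_last]; positivity
        | cast k =>
            rw [hβ'def, Fin.snoc_castSucc]; exact hβ _
      have hmp' : MeasurePreserving (MeasurableEquiv.piFinSuccAbove (fun _ : Fin (d+1) => ℝ)
          (Fin.last d)) (volume : Measure (Fin (d+1) → ℝ))
          ((volume : Measure ℝ).prod (volume : Measure (Fin d → ℝ))) := by
        have := measurePreserving_piFinSuccAbove
          (fun _ : Fin (d+1) => (volume : Measure ℝ)) (Fin.last d)
        simpa [← volume_pi] using this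
      set e := MeasurableEquiv.piFinSuccAbove (fun _ : Fin (d+1) => ℝ) (Fin.last d) with he_def
      set f : (Fin (d+1) → ℝ) → ℝ≥0∞ := fun y =>
        Set.indicator (SS (d+1)) (fun y => ENNReal.ofReal (dens (d+1) β y)) y with hf_def
      have hfmeas : Measurable f :=
        ((measurable_dens (d+1) β).ennreal_ofReal).indicator (measurableSet_SS _)
      have hsymm : ∀ (x : ℝ) (y' : Fin d → ℝ), e.symm (x, y') = (Fin.snoc y' x : Fin (d+1) → ℝ) := by
        intro x y'
        rw [he_def]
        simp only [MeasurableEquiv.piFinSuccAbove_symm_apply, Fin.insertNthEquiv_last]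
        rfl
      have hsum : ∀ (x : ℝ) (y' : Fin d → ℝ),
          (∑ i, (Fin.snoc y' x : Fin (d+1) → ℝ) i) = (∑ k, y' k) + x := by
        intro x y'
        rw [Fin.sum_univ_castSucc]
        simp
      have hmem : ∀ (x : ℝ) (y' : Fin d → ℝ),
          ((Fin.snoc y' x : Fin (d+1) → ℝ) ∈ SS (d+1)) ↔ (y' ∈ SS d ∧ x ∈ Ioo 0 (1 - ∑ k, y' k)) := by
        intro x y'
        simp only [SS, mem_setOf_eq, mem_Ioo, hsum]
        constructor
        · rintro ⟨h1, h2⟩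
          have hx : 0 < x := by simpa using h1 (Fin.last d)
          have hk : ∀ k, 0 < y' k := fun k => by simpa using h1 k.castSucc
          exact ⟨⟨hk, by linarith⟩, hx, by linarith⟩
        · rintro ⟨⟨hk, _⟩, hx1, hx2⟩
          refine ⟨fun i => ?_, by linarith⟩
          induction i using Fin.lastCases with
          | last => simpa using hx1
          | cast k => simpa using hk k
      have hprod : ∀ (x : ℝ) (y' : Fin d → ℝ),
          dens (d+1) β (Fin.snoc y' x : Fin (d+1) → ℝ)
          = (∏ k : Fin d, (y' k) ^ (β k.castSucc.castSucc - 1)) *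
              (x ^ (p - 1) * ((1 - ∑ k, y' k) - x) ^ (q - 1)) := by
        intro x y'
        have h1 : ppi (d+1) (Fin.snoc y' x : Fin (d+1) → ℝ)
            = (Fin.snoc (Fin.snoc y' x : Fin (d+1) → ℝ) (1 - ((∑ k, y' k) + x)) : Fin (d+2) → ℝ) := by
          rw [ppi, hsum]
        rw [dens, h1, Fin.prod_univ_castSucc, Fin.prod_univ_castSucc]
        simp only [Fin.snoc_castSucc, Fin.snoc_last]
        rw [show (1:ℝ) - ((∑ k, y' k) + x) = (1 - ∑ k, y' k) - x by ring]
        ring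
      have hinner : ∀ y' : Fin d → ℝ,
          (∫⁻ x : ℝ, f (e.symm (x, y')))
          = Set.indicator (SS d) (fun y'' =>
              ENNReal.ofReal (Real.Gamma p * Real.Gamma q / Real.Gamma (p+q)) *
              ENNReal.ofReal (dens d β' y'')) y' := by
        intro y'
        by_cases hy' : y' ∈ SS d
        · have hc : 0 < 1 - ∑ k, y' k := sub_pos.2 hy'.2
          have hC0 : 0 ≤ ∏ k : Fin d, (y' k) ^ (β k.castSucc.castSucc - 1) :=
            Finset.prod_nonneg fun k _ => rpow_nonneg (hy'.1 k).le _
          have hfx : ∀ x : ℝ, f (e.symm (x, y'))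
              = Set.indicator (Ioo (0:ℝ) (1 - ∑ k, y' k)) (fun x =>
                  ENNReal.ofReal (∏ k : Fin d, (y' k) ^ (β k.castSucc.castSucc - 1)) *
                  ENNReal.ofReal (x ^ (p-1) * ((1 - ∑ k, y' k) - x) ^ (q-1))) x := by
            intro x
            simp only [hsymm, hf_def]
            by_cases hx : x ∈ Ioo (0:ℝ) (1 - ∑ k, y' k)
            · rw [indicator_of_mem hx,
                indicator_of_mem ((hmem x y').2 ⟨hy', hx⟩), hprod,
                ENNReal.ofReal_mul hC0]
            · rw [indicator_of_notMem hx,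
                indicator_of_notMem (fun hm => hx ((hmem x y').1 hm).2)]
          rw [indicator_of_mem hy', lintegral_congr hfx,
            lintegral_indicator measurableSet_Ioo,
            lintegral_const_mul' _ _ ENNReal.ofReal_ne_top,
            betaLintegral_scaled hp hq hc]
          have hexp : dens d β' y'
              = (∏ k : Fin d, (y' k) ^ (β k.castSucc.castSucc - 1)) *
                (1 - ∑ k, y' k) ^ (p + q - 1) := by
            rw [dens, Fin.prod_univ_castSucc]
            simp only [hβ'def, ppi, Fin.snoc_castSucc, Fin.snoc_last]
          rw [hexp, ENNReal.ofReal_mul hC0,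
            ENNReal.ofReal_mul (rpow_nonneg hc.le _)]
          ring
        · rw [indicator_of_notMem hy']
          have hzero : ∀ x : ℝ, f (e.symm (x, y')) = 0 := by
            intro x
            simp only [hsymm, hf_def]
            exact indicator_of_notMem (fun h => hy' ((hmem x y').1 h).1) _
          rw [lintegral_congr hzero, lintegral_zero]
      calc ∫⁻ y in SS (d+1), ENNReal.ofReal (dens (d+1) β y)
          = ∫⁻ y, f y := (lintegral_indicator (measurableSet_SS _) _).symm
        _ = ∫⁻ z : ℝ × (Fin d → ℝ), f (e.symm z)
              ∂((volume : Measure ℝ).prod (volume : Measure (Fin d → ℝ))) :=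
            MeasurePreserving.lintegral_map_equiv f e.symm (hmp'.symm)
        _ = ∫⁻ y' : Fin d → ℝ, ∫⁻ x : ℝ, f (e.symm (x, y')) := by
            exact lintegral_prod_symm _ ((hfmeas.comp e.symm.measurable).aemeasurable)
        _ = ∫⁻ y', Set.indicator (SS d) (fun y'' =>
              ENNReal.ofReal (Real.Gamma p * Real.Gamma q / Real.Gamma (p+q)) *
              ENNReal.ofReal (dens d β' y'')) y' := lintegral_congr hinner
        _ = ∫⁻ y' in SS d,
              ENNReal.ofReal (Real.Gamma p * Real.Gamma q / Real.Gamma (p+q)) *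
              ENNReal.ofReal (dens d β' y') := lintegral_indicator (measurableSet_SS _) _
        _ = ENNReal.ofReal (Real.Gamma p * Real.Gamma q / Real.Gamma (p+q)) *
              ∫⁻ y' in SS d, ENNReal.ofReal (dens d β' y') :=
            lintegral_const_mul' _ _ ENNReal.ofReal_ne_top
        _ = ENNReal.ofReal (Real.Gamma p * Real.Gamma q / Real.Gamma (p+q)) *
              ENNReal.ofReal ((∏ i, Real.Gamma (β' i)) / Real.Gamma (∑ i, β' i)) := by
            rw [IH β' hβ']
        _ = ENNReal.ofReal ((∏ i, Real.Gamma (β i)) / Real.Gamma (∑ i, β i)) := by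
            rw [← ENNReal.ofReal_mul (by positivity)]
            congr 1
            have hsum' : (∑ i, β' i) = ∑ i, β i := by
              rw [Fin.sum_univ_castSucc (n := d+1) (f := β),
                Fin.sum_univ_castSucc (n := d) (f := fun j : Fin (d+1) => β j.castSucc),
                Fin.sum_univ_castSucc (n := d) (f := β')]
              simp only [hβ'def, Fin.snoc_castSucc, Fin.snoc_last]
              ring
            have hprodΓ : (∏ i, Real.Gamma (β' i))
                = (∏ k : Fin d, Real.Gamma (β k.castSucc.castSucc)) * Real.Gamma (p + q) := by
              rw [Fin.prod_univ_castSucc (f := fun i => Real.Gamma (β' i))]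
              simp only [hβ'def, Fin.snoc_castSucc, Fin.snoc_last]
            have hprodΓ2 : (∏ i, Real.Gamma (β i))
                = (∏ k : Fin d, Real.Gamma (β k.castSucc.castSucc)) *
                    Real.Gamma p * Real.Gamma q := by
              rw [Fin.prod_univ_castSucc (n := d+1) (f := fun i => Real.Gamma (β i)),
                Fin.prod_univ_castSucc (n := d)
                  (f := fun j : Fin (d+1) => Real.Gamma (β j.castSucc))]
            rw [hsum', hprodΓ, hprodΓ2]
            have h1 : Real.Gamma (p + q) ≠ 0 := (Real.Gamma_pos_of_pos (by positivity)).ne'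
            rw [div_mul_div_comm,
              show Real.Gamma p * Real.Gamma q *
                  ((∏ k : Fin d, Real.Gamma (β k.castSucc.castSucc)) * Real.Gamma (p + q))
                = ((∏ k : Fin d, Real.Gamma (β k.castSucc.castSucc)) * Real.Gamma p *
                    Real.Gamma q) * Real.Gamma (p + q) from by ring,
              show Real.Gamma (p + q) * Real.Gamma (∑ i, β i)
                = Real.Gamma (∑ i, β i) * Real.Gamma (p + q) from by ring,
              mul_div_mul_comm, div_self h1, mul_one]


lemma sum_pos {d : ℕ} {β : Fin (d + 1) → ℝ} (hβ : ∀ i, 0 < β i) : 0 < ∑ i, β i :=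
  Finset.sum_pos (fun i _ => hβ i) ⟨0, Finset.mem_univ 0⟩

lemma gammaRatio_pos {d : ℕ} {β : Fin (d + 1) → ℝ} (hβ : ∀ i, 0 < β i) :
    0 < (∏ i, Real.Gamma (β i)) / Real.Gamma (∑ i, β i) :=
  div_pos (Finset.prod_pos fun i _ => Real.Gamma_pos_of_pos (hβ i))
    (Real.Gamma_pos_of_pos (sum_pos hβ))

lemma dirichlet_integrableOn {d : ℕ} {β : Fin (d + 1) → ℝ} (hβ : ∀ i, 0 < β i) :
    IntegrableOn (dens d β) (SS d) volume := by
  have hnn : 0 ≤ᵐ[volume.restrict (SS d)] dens d β :=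
    (ae_restrict_iff' (measurableSet_SS d)).2 (ae_of_all _ fun y hy => dens_nonneg_on hy)
  refine ⟨(measurable_dens d β).aestronglyMeasurable, ?_⟩
  rw [hasFiniteIntegral_iff_ofReal hnn, dirichlet_lintegral d β hβ]
  exact ENNReal.ofReal_lt_top

lemma dirichlet_integral {d : ℕ} {β : Fin (d + 1) → ℝ} (hβ : ∀ i, 0 < β i) :
    ∫ y in SS d, dens d β y = (∏ i, Real.Gamma (β i)) / Real.Gamma (∑ i, β i) := by
  have hnn : 0 ≤ᵐ[volume.restrict (SS d)] dens d β :=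
    (ae_restrict_iff' (measurableSet_SS d)).2 (ae_of_all _ fun y hy => dens_nonneg_on hy)
  rw [integral_eq_lintegral_of_nonneg_ae hnn (measurable_dens d β).aestronglyMeasurable,
    dirichlet_lintegral d β hβ, ENNReal.toReal_ofReal (gammaRatio_pos hβ).le]

lemma update_pos {d : ℕ} {β : Fin (d + 1) → ℝ} (hβ : ∀ i, 0 < β i) {j : Fin (d + 1)} {x : ℝ}
    (hx : 0 < x) (i : Fin (d + 1)) : 0 < Function.update β j x i := by
  rcases eq_or_ne i j with rfl | h
  · rwa [Function.update_self]
  · rw [Function.update_of_ne h]; exact hβ i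

lemma dens_update (d : ℕ) (β : Fin (d + 1) → ℝ) (j : Fin (d + 1)) (x : ℝ) (y : Fin d → ℝ) :
    dens d (Function.update β j x) y
      = ppi d y j ^ (x - 1) * ∏ i ∈ Finset.univ.erase j, (ppi d y i) ^ (β i - 1) := by
  rw [dens, ← Finset.mul_prod_erase Finset.univ _ (Finset.mem_univ j), Function.update_self]
  congr 1
  exact Finset.prod_congr rfl fun i hi => by
    rw [Function.update_of_ne (Finset.ne_of_mem_erase hi)]

lemma sum_update {d : ℕ} (β : Fin (d + 1) → ℝ) (j : Fin (d + 1)) (x : ℝ) :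
    ∑ i, Function.update β j x i = x + ∑ i ∈ Finset.univ.erase j, β i := by
  rw [Finset.sum_update_of_mem (Finset.mem_univ j), Finset.sdiff_singleton_eq_erase]

lemma prodGamma_update {d : ℕ} (β : Fin (d + 1) → ℝ) (j : Fin (d + 1)) (x : ℝ) :
    ∏ i, Real.Gamma (Function.update β j x i)
      = Real.Gamma x * ∏ i ∈ Finset.univ.erase j, Real.Gamma (β i) := by
  rw [← Finset.mul_prod_erase Finset.univ _ (Finset.mem_univ j), Function.update_self]
  congr 1
  exact Finset.prod_congr rfl fun i hi => by
    rw [Function.update_of_ne (Finset.ne_of_mem_erase hi)]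

lemma ppi_mul_dens {d : ℕ} {β : Fin (d + 1) → ℝ} (j : Fin (d + 1)) {y : Fin d → ℝ}
    (hy : y ∈ SS d) :
    ppi d y j * dens d β y = dens d (Function.update β j (β j + 1)) y := by
  rw [dens_update, show β j + 1 - 1 = β j by ring,
    show dens d β y = dens d (Function.update β j (β j)) y by rw [Function.update_eq_self],
    dens_update, show β j = 1 + (β j - 1) by ring, rpow_add (ppi_pos hy j), rpow_one]
  ring_nf

/-- The mean integral. -/
lemma dirichlet_mean {d : ℕ} {β : Fin (d + 1) → ℝ} (hβ : ∀ i, 0 < β i) (j : Fin (d + 1)) :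
    ∫ y in SS d, ppi d y j * dens d β y
      = (β j / ∑ i, β i) * ((∏ i, Real.Gamma (β i)) / Real.Gamma (∑ i, β i)) := by
  have hupd : ∀ i, 0 < Function.update β j (β j + 1) i :=
    update_pos hβ (by linarith [hβ j])
  have hcongr : ∀ y ∈ SS d, ppi d y j * dens d β y
      = dens d (Function.update β j (β j + 1)) y := fun y hy => ppi_mul_dens j hy
  rw [setIntegral_congr_fun (measurableSet_SS d) hcongr, dirichlet_integral hupd,
    prodGamma_update, sum_update]
  have hAe : ∑ i ∈ Finset.univ.erase j, β i = (∑ i, β i) - β j := by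
    rw [← Finset.add_sum_erase Finset.univ β (Finset.mem_univ j)]; ring
  have hA : 0 < ∑ i, β i := sum_pos hβ
  rw [hAe, show β j + 1 + ((∑ i, β i) - β j) = (∑ i, β i) + 1 by ring,
    Real.Gamma_add_one (hβ j).ne', Real.Gamma_add_one hA.ne',
    ← Finset.mul_prod_erase Finset.univ (fun i => Real.Gamma (β i)) (Finset.mem_univ j)]
  have h1 : Real.Gamma (β j) ≠ 0 := (Real.Gamma_pos_of_pos (hβ j)).ne'
  have h2 : Real.Gamma (∑ i, β i) ≠ 0 := (Real.Gamma_pos_of_pos hA).ne'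
  field_simp

lemma hasDerivAt_logGamma {x : ℝ} (hx : 0 < x) :
    HasDerivAt (fun y => Real.log (Real.Gamma y)) (digamma x) x := by
  have hne : ∀ m : ℕ, x ≠ -m := by
    intro m h
    have h0 : (0:ℝ) ≤ (m:ℝ) := Nat.cast_nonneg m
    nlinarith [hx]
  have hd : DifferentiableAt ℝ (fun y => Real.log (Real.Gamma y)) x :=
    (Real.differentiableAt_Gamma hne).log (Real.Gamma_pos_of_pos hx).ne'
  simpa [digamma] using hd.hasDerivAt

lemma hasDerivAt_Gamma {x : ℝ} (hx : 0 < x) :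
    HasDerivAt Real.Gamma (Real.Gamma x * digamma x) x := by
  have h1 := (hasDerivAt_logGamma hx).exp
  have h2 : (fun y => Real.exp (Real.log (Real.Gamma y))) =ᶠ[nhds x] Real.Gamma := by
    filter_upwards [eventually_gt_nhds hx] with y hy
    exact Real.exp_log (Real.Gamma_pos_of_pos hy)
  have h3 := h1.congr_of_eventuallyEq h2.symm
  simpa [Real.exp_log (Real.Gamma_pos_of_pos hx)] using h3

lemma neg_log_le {b δ : ℝ} (hb : 0 < b) (hb1 : b ≤ 1) (hδ : 0 < δ) :
    |Real.log b| ≤ b ^ (-δ) / δ := by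
  rw [abs_of_nonpos (Real.log_nonpos hb.le hb1)]
  have h2 : Real.log (b ^ (-δ)) = -δ * Real.log b := Real.log_rpow hb _
  have h3 : Real.log (b ^ (-δ)) ≤ b ^ (-δ) :=
    (Real.log_le_sub_one_of_pos (rpow_pos_of_pos hb _)).trans (by linarith)
  have h4 : -Real.log b = Real.log (b ^ (-δ)) / δ := by
    rw [h2]; field_simp
  rw [h4]
  gcongr


/-- Differentiation under the integral sign for the Dirichlet log integral. -/
lemma dirichlet_deriv {d : ℕ} {β : Fin (d + 1) → ℝ} (hβ : ∀ i, 0 < β i) (j : Fin (d + 1)) :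
    IntegrableOn
      (fun y => Real.log (ppi d y j) * dens d (Function.update β j (β j + 1)) y) (SS d) volume ∧
    ∫ y in SS d, Real.log (ppi d y j) * dens d (Function.update β j (β j + 1)) y
      = (β j / ∑ i, β i) * ((∏ i, Real.Gamma (β i)) / Real.Gamma (∑ i, β i)) *
          (digamma (β j + 1) - digamma ((∑ i, β i) + 1)) := by
  set μS := volume.restrict (SS d) with hμS
  set A := ∑ i, β i with hA_def
  have hA : 0 < A := sum_pos hβ
  set Aj := ∑ i ∈ Finset.univ.erase j, β i with hAj_def
  have hAj : A = β j + Aj := by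
    rw [hA_def, hAj_def, ← Finset.add_sum_erase Finset.univ β (Finset.mem_univ j)]
  have hAj0 : 0 ≤ Aj := Finset.sum_nonneg fun i _ => (hβ i).le
  set C := ∏ i ∈ Finset.univ.erase j, Real.Gamma (β i) with hC_def
  have hC : 0 < C := Finset.prod_pos fun i _ => Real.Gamma_pos_of_pos (hβ i)
  set F : ℝ → (Fin d → ℝ) → ℝ := fun x y => dens d (Function.update β j x) y with hF_def
  set F' : ℝ → (Fin d → ℝ) → ℝ :=
    fun x y => Real.log (ppi d y j) * dens d (Function.update β j x) y with hF'_def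
  set a0 : ℝ := β j + 1 with ha0_def
  have ha0 : 0 < a0 := by rw [ha0_def]; linarith [hβ j]
  set εb : ℝ := β j / 4 with hεb_def
  have hεb : 0 < εb := by rw [hεb_def]; linarith [hβ j]
  set bound : (Fin d → ℝ) → ℝ :=
    fun y => (4 / β j) * dens d (Function.update β j (β j / 2 + 1)) y with hbound_def
  have hupd1 : ∀ i, 0 < Function.update β j (β j + 1) i := update_pos hβ (by linarith [hβ j])
  have hupd2 : ∀ i, 0 < Function.update β j (β j / 2 + 1) i :=
    update_pos hβ (by linarith [hβ j])
  have key := hasDerivAt_integral_of_dominated_loc_of_deriv_le (μ := μS) (F := F) (F' := F')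
    (x₀ := a0) (bound := bound) (Metric.ball_mem_nhds a0 hεb)
    (Filter.Eventually.of_forall fun x => (measurable_dens _ _).aestronglyMeasurable)
    (dirichlet_integrableOn hupd1)
    (((Real.measurable_log.comp (measurable_ppi d j)).mul
      (measurable_dens _ _)).aestronglyMeasurable)
    ?hbound ?hboundint ?hdiff
  case hbound =>
    refine (ae_restrict_iff' (measurableSet_SS d)).2 (ae_of_all _ fun y hy => ?_)
    intro x hx
    have hpj := ppi_pos hy j
    have hle := ppi_le_one hy j
    have hxd : |x - a0| < εb := by
      rw [← Real.dist_eq]; exact Metric.mem_ball.1 hx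
    have hx1 : β j / 2 ≤ x - 1 - β j / 4 := by
      rw [abs_sub_lt_iff] at hxd
      rw [ha0_def, hεb_def] at hxd
      linarith [hxd.2]
    have hR0 : 0 ≤ ∏ i ∈ Finset.univ.erase j, (ppi d y i) ^ (β i - 1) :=
      Finset.prod_nonneg fun i _ => (rpow_pos_of_pos (ppi_pos hy i) _).le
    rw [hF'_def, hbound_def]
    simp only
    rw [dens_update, dens_update, show β j / 2 + 1 - 1 = β j / 2 by ring]
    rw [Real.norm_eq_abs, abs_mul, abs_mul,
      abs_of_nonneg (rpow_pos_of_pos hpj _).le, abs_of_nonneg hR0]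
    have hlog : |Real.log (ppi d y j)| ≤ (ppi d y j) ^ (-(β j / 4)) / (β j / 4) :=
      neg_log_le hpj hle (by linarith [hβ j])
    have hmul : |Real.log (ppi d y j)| * (ppi d y j) ^ (x - 1)
        ≤ (4 / β j) * (ppi d y j) ^ (β j / 2) := by
      calc |Real.log (ppi d y j)| * (ppi d y j) ^ (x - 1)
          ≤ ((ppi d y j) ^ (-(β j / 4)) / (β j / 4)) * (ppi d y j) ^ (x - 1) := by
            apply mul_le_mul_of_nonneg_right hlog (rpow_pos_of_pos hpj _).le
        _ = (4 / β j) * (ppi d y j) ^ (x - 1 - β j / 4) := by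
            rw [div_mul_eq_mul_div, ← Real.rpow_add hpj,
              show -(β j / 4) + (x - 1) = x - 1 - β j / 4 by ring,
              div_eq_inv_mul, inv_div]
        _ ≤ (4 / β j) * (ppi d y j) ^ (β j / 2) := by
            have := Real.rpow_le_rpow_of_exponent_ge hpj hle hx1
            exact mul_le_mul_of_nonneg_left this (div_pos (by norm_num) (hβ j)).le
    calc |Real.log (ppi d y j)| * ((ppi d y j) ^ (x - 1) *
          ∏ i ∈ Finset.univ.erase j, (ppi d y i) ^ (β i - 1))
        = |Real.log (ppi d y j)| * (ppi d y j) ^ (x - 1) *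
          ∏ i ∈ Finset.univ.erase j, (ppi d y i) ^ (β i - 1) := by ring
      _ ≤ (4 / β j) * (ppi d y j) ^ (β j / 2) *
          ∏ i ∈ Finset.univ.erase j, (ppi d y i) ^ (β i - 1) :=
          mul_le_mul_of_nonneg_right hmul hR0
      _ = 4 / β j * ((ppi d y j) ^ (β j / 2) *
          ∏ i ∈ Finset.univ.erase j, (ppi d y i) ^ (β i - 1)) := by ring
  case hboundint =>
    exact (dirichlet_integrableOn hupd2).const_mul _
  case hdiff =>
    refine (ae_restrict_iff' (measurableSet_SS d)).2 (ae_of_all _ fun y hy => ?_)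
    intro x hx
    have hpj := ppi_pos hy j
    have hder : HasDerivAt (fun x : ℝ => (ppi d y j) ^ (x - 1) *
        ∏ i ∈ Finset.univ.erase j, (ppi d y i) ^ (β i - 1))
        (Real.log (ppi d y j) * dens d (Function.update β j x) y) x := by
      have h1 : HasDerivAt (fun x : ℝ => (ppi d y j) ^ x)
          ((ppi d y j) ^ (x - 1) * Real.log (ppi d y j)) (x - 1) :=
        (Real.hasStrictDerivAt_const_rpow hpj (x - 1)).hasDerivAt
      have h2 : HasDerivAt (fun x : ℝ => x - 1) 1 x := (hasDerivAt_id x).sub_const 1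
      have h3 := (h1.comp x h2 : HasDerivAt (fun x : ℝ => (ppi d y j) ^ (x - 1)) _ x)
      have h4 := h3.mul_const (∏ i ∈ Finset.univ.erase j, (ppi d y i) ^ (β i - 1))
      refine h4.congr_deriv ?_
      rw [dens_update]
      ring
    refine HasDerivAt.congr_of_eventuallyEq hder ?_
    exact Filter.Eventually.of_forall fun x => dens_update d β j x y
  obtain ⟨hint, hderiv⟩ := key
  -- the closed form
  set K : ℝ → ℝ := fun x => Real.Gamma x * C / Real.Gamma (x + Aj) with hK_def
  have hKeq : ∀ x : ℝ, 0 < x → (∫ y, F x y ∂μS) = K x := by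
    intro x hx
    rw [hμS, hF_def]
    have := dirichlet_integral (update_pos hβ hx (j := j))
    rw [this, prodGamma_update, sum_update]
  have hGA : Real.Gamma (a0 + Aj) ≠ 0 :=
    (Real.Gamma_pos_of_pos (by linarith [ha0])).ne'
  have hKd : HasDerivAt K (K a0 * (digamma a0 - digamma (a0 + Aj))) a0 := by
    have h1 := (hasDerivAt_Gamma ha0).mul_const C
    have h2 : HasDerivAt (fun x : ℝ => Real.Gamma (x + Aj))
        (Real.Gamma (a0 + Aj) * digamma (a0 + Aj)) a0 := by
      have hcomp := (hasDerivAt_Gamma (show 0 < a0 + Aj by linarith [ha0])).comp a0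
        ((hasDerivAt_id a0).add_const Aj)
      simp only [Function.comp_def, id, mul_one] at hcomp
      exact hcomp
    have h3 := h1.div h2 hGA
    refine h3.congr_deriv ?_
    rw [hK_def]
    simp only
    field_simp
  have hg : (fun x => ∫ y, F x y ∂μS) =ᶠ[nhds a0] K := by
    filter_upwards [eventually_gt_nhds ha0] with x hx
    exact hKeq x hx
  have hgd : HasDerivAt (fun x => ∫ y, F x y ∂μS) (K a0 * (digamma a0 - digamma (a0 + Aj))) a0 :=
    hKd.congr_of_eventuallyEq hg
  have huniq : (∫ y, F' a0 y ∂μS) = K a0 * (digamma a0 - digamma (a0 + Aj)) :=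
    hderiv.unique hgd
  have hKa0 : K a0 = (β j / A) * ((∏ i, Real.Gamma (β i)) / Real.Gamma A) := by
    rw [hK_def]
    simp only
    rw [ha0_def, show β j + 1 + Aj = A + 1 by rw [hAj]; ring,
      Real.Gamma_add_one (hβ j).ne', Real.Gamma_add_one hA.ne',
      ← Finset.mul_prod_erase Finset.univ (fun i => Real.Gamma (β i)) (Finset.mem_univ j),
      ← hC_def]
    have h1 : Real.Gamma A ≠ 0 := (Real.Gamma_pos_of_pos hA).ne'
    field_simp
  have haj2 : a0 + Aj = A + 1 := by rw [ha0_def, hAj]; ring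
  constructor
  · exact hint
  · have : (∫ y, F' a0 y ∂μS)
        = ∫ y in SS d, Real.log (ppi d y j) * dens d (Function.update β j (β j + 1)) y := rfl
    rw [← this, huniq, hKa0, haj2, ha0_def]

end DirAux

open DirAux

/-- For a Dirichlet-distributed random probability vector `π` on the `d`-simplex
with parameters `α i = n_i + s t_i` (total `n + s`, where `n = Σ n_i` and `t` is in
the simplex), parametrized by its first `d` coordinates `y` on
`S = {y | y i > 0, Σ y < 1}` with density proportional to `Π_i π_i^{α_i − 1}`:
the expected value of `π j` is `u j = (n_j + s t_j)/(n + s)`, and the expected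
entropy `E[−Σ π_i log π_i]` equals `Σ_i h(u_i)` with
`h(u) = u [ψ(n+s+1) − ψ((n+s)u+1)]`. -/
theorem dirichlet_mean_and_expected_entropy {d : ℕ}
    (nv : Fin (d + 1) → ℝ) (s : ℝ) (t : Fin (d + 1) → ℝ)
    (hs : 0 < s) (hnv : ∀ i, 0 ≤ nv i) (ht : t ∈ stdSimplex ℝ (Fin (d + 1)))
    (hpos : ∀ i, 0 < nv i + s * t i) (n : ℝ) (hn : n = ∑ i, nv i) :
    let α : Fin (d + 1) → ℝ := fun i => nv i + s * t i
    let π : (Fin d → ℝ) → Fin (d + 1) → ℝ :=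
      fun y => Fin.snoc y (1 - ∑ i, y i)
    let S : Set (Fin d → ℝ) := {y | (∀ i, 0 < y i) ∧ ∑ i, y i < 1}
    let dens : (Fin d → ℝ) → ℝ := fun y => ∏ i, (π y i) ^ (α i - 1)
    let Z : ℝ := ∫ y in S, dens y
    let u : Fin (d + 1) → ℝ := fun i => (nv i + s * t i) / (n + s)
    (∀ j, (∫ y in S, π y j * dens y) / Z = u j) ∧
    (∫ y in S, (-∑ i, π y i * Real.log (π y i)) * dens y) / Z
      = ∑ i, u i * (digamma (n + s + 1) - digamma ((n + s) * u i + 1)) := by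
  intro α π S densl Z u
  have hα : ∀ i, 0 < α i := hpos
  have hn0 : 0 ≤ n := hn ▸ Finset.sum_nonneg fun i _ => hnv i
  have hns : 0 < n + s := by linarith
  have hsumα : ∑ i, α i = n + s := by
    show ∑ i, (nv i + s * t i) = n + s
    rw [Finset.sum_add_distrib, ← Finset.mul_sum, ht.2, hn]
    ring
  have hV : (0:ℝ) < (∏ i, Real.Gamma (α i)) / Real.Gamma (∑ i, α i) := gammaRatio_pos hα
  constructor
  · intro j
    show (∫ y in SS d, ppi d y j * DirAux.dens d α y) /
        (∫ y in SS d, DirAux.dens d α y) = α j / (n + s)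
    rw [dirichlet_mean hα j, dirichlet_integral hα,
      mul_div_assoc, div_self hV.ne', mul_one, hsumα]
  · show (∫ y in SS d, (-∑ i, ppi d y i * Real.log (ppi d y i)) * DirAux.dens d α y) /
        (∫ y in SS d, DirAux.dens d α y)
      = ∑ i, α i / (n + s) * (digamma (n + s + 1) - digamma ((n + s) * (α i / (n + s)) + 1))
    have hcongr : ∀ y ∈ SS d,
        (-∑ i, ppi d y i * Real.log (ppi d y i)) * DirAux.dens d α y
        = ∑ i, -(Real.log (ppi d y i) *
            DirAux.dens d (Function.update α i (α i + 1)) y) := by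
      intro y hy
      rw [neg_mul, Finset.sum_mul, ← Finset.sum_neg_distrib]
      refine Finset.sum_congr rfl fun i _ => ?_
      rw [show ppi d y i * Real.log (ppi d y i) * DirAux.dens d α y
          = Real.log (ppi d y i) * (ppi d y i * DirAux.dens d α y) from by ring,
        ppi_mul_dens i hy]
    have hIneg : ∀ i : Fin (d + 1), IntegrableOn
        (fun y => -(Real.log (ppi d y i) * DirAux.dens d (Function.update α i (α i + 1)) y))
        (SS d) volume := fun i => (dirichlet_deriv hα i).1.neg
    rw [setIntegral_congr_fun (measurableSet_SS d) hcongr,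
      integral_finset_sum Finset.univ (fun i _ => hIneg i)]
    have hterm : ∀ i : Fin (d + 1),
        (∫ y in SS d, -(Real.log (ppi d y i) *
            DirAux.dens d (Function.update α i (α i + 1)) y))
        = -((α i / (n + s)) * ((∏ k, Real.Gamma (α k)) / Real.Gamma (∑ k, α k)) *
            (digamma (α i + 1) - digamma (n + s + 1))) := by
      intro i
      rw [integral_neg, (dirichlet_deriv hα i).2, hsumα]
    rw [dirichlet_integral hα]
    simp only [hterm]
    rw [Finset.sum_div]
    refine Finset.sum_congr rfl fun i _ => ?_
    rw [show (n + s) * (α i / (n + s)) = α i from by field_simp]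
    set a := α i with ha
    set D1 := digamma (n + s + 1) with hD1
    set D2 := digamma (a + 1) with hD2
    rw [div_eq_iff hV.ne']
    ring
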